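/- Let d be a positive integer and p : ℝ^d → ℝ a continuous probability density with finite second moments (∫ ‖y‖² p(y) dy < ∞). Let x' ∈ ℝ^d with p(x') > 0. Then lim_{δ → −∞} [ e^{−2δ} ∫_{ℝ^d} p(x' − y) ‖y‖² N^δ_d(y) dy ] / [ ∫_{ℝ^d} p(x' − y) N^δ_d(y) dy ] = d. -/

import Mathlib

open MeasureTheory Real Filter Topology

/-- The density of the Gaussian distribution `N(0, e^{2δ} I_k)` on `ℝ^k`. -/
noncomputable def gaussDens (k : ℕ) (δ : ℝ) (y : EuclideanSpace ℝ (Fin k)) : ℝ :=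
  (2 * π) ^ (-(k : ℝ) / 2) * Real.exp (-(k : ℝ) * δ) *
    Real.exp (-Real.exp (-2 * δ) * ‖y‖ ^ 2 / 2)

private lemma hring : ∀ x : ℝ, -(1/2 : ℝ) * x ^ 2 = -x ^ 2 / 2 := fun x => by ring

lemma int_exp1d : ∫ x : ℝ, Real.exp (-x ^ 2 / 2) = Real.sqrt (2 * π) := by
  have h := integral_gaussian (1/2)
  simp_rw [hring] at h
  rw [h]; norm_num; ring

lemma integrable_exp1d : Integrable (fun x : ℝ => Real.exp (-x ^ 2 / 2)) := by
  have := integrable_exp_neg_mul_sq (b := 1/2) (by norm_num)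
  simpa only [hring] using this

lemma integrable_sq_exp1d : Integrable (fun x : ℝ => x ^ 2 * Real.exp (-x ^ 2 / 2)) := by
  have := integrable_rpow_mul_exp_neg_mul_sq (b := 1/2) (by norm_num) (s := 2) (by norm_num)
  have h2 : ∀ x : ℝ, x ^ (2:ℝ) = x ^ (2:ℕ) := fun x => by
    rw [show (2:ℝ) = ((2:ℕ):ℝ) by norm_num, Real.rpow_natCast]
  simpa only [hring, h2] using this

lemma tendsto_F : Tendsto (fun x : ℝ => -x * Real.exp (-x ^ 2 / 2)) (cocompact ℝ) (𝓝 0) := by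
  have h := tendsto_rpow_abs_mul_exp_neg_mul_sq_cocompact (a := 1/2) (by norm_num) 1
  rw [tendsto_zero_iff_norm_tendsto_zero]
  refine h.congr fun x => ?_
  rw [Real.rpow_one, Real.norm_eq_abs, abs_mul, abs_neg, abs_of_pos (Real.exp_pos _), hring x]

lemma deriv_F (x : ℝ) : HasDerivAt (fun x : ℝ => -x * Real.exp (-x ^ 2 / 2))
    ((x ^ 2 - 1) * Real.exp (-x ^ 2 / 2)) x := by
  have h1 : HasDerivAt (fun x : ℝ => -x ^ 2 / 2) (-x) x := by
    have h := (hasDerivAt_pow 2 x).neg.div_const 2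
    exact (show -(((2:ℕ):ℝ) * x ^ (2-1))/2 = -x by push_cast; ring) ▸ h
  have h2 := h1.exp
  have h3 := ((hasDerivAt_id x).neg).mul h2
  convert h3 using 1
  · rfl
  · rfl
  · funext y; simp only [Pi.mul_apply, Pi.neg_apply, id]
  · simp only [Pi.neg_apply, id]
    ring

lemma int_sq_exp1d : ∫ x : ℝ, x ^ 2 * Real.exp (-x ^ 2 / 2) = Real.sqrt (2 * π) := by
  have hint : Integrable (fun x : ℝ => (x ^ 2 - 1) * Real.exp (-x ^ 2 / 2)) := by
    simpa only [sub_mul, one_mul, Pi.sub_def] using integrable_sq_exp1d.sub integrable_exp1d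
  have hbot : Tendsto (fun x : ℝ => -x * Real.exp (-x ^ 2 / 2)) atBot (𝓝 0) :=
    tendsto_F.mono_left (by rw [cocompact_eq_atBot_atTop]; exact le_sup_left)
  have htop : Tendsto (fun x : ℝ => -x * Real.exp (-x ^ 2 / 2)) atTop (𝓝 0) :=
    tendsto_F.mono_left (by rw [cocompact_eq_atBot_atTop]; exact le_sup_right)
  have h0 := integral_of_hasDerivAt_of_tendsto deriv_F hint hbot htop
  simp only [sub_zero] at h0
  have : ∫ x : ℝ, (x ^ 2 - 1) * Real.exp (-x ^ 2 / 2)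
      = (∫ x : ℝ, x ^ 2 * Real.exp (-x ^ 2 / 2)) - ∫ x : ℝ, Real.exp (-x ^ 2 / 2) := by
    simp_rw [sub_mul, one_mul]
    exact integral_sub integrable_sq_exp1d integrable_exp1d
  rw [this] at h0
  have := sub_eq_zero.mp h0
  rw [this, int_exp1d]

lemma int_exp_nd (d : ℕ) : ∫ u : EuclideanSpace ℝ (Fin d), Real.exp (-‖u‖ ^ 2 / 2)
    = (2 * π) ^ ((d:ℝ) / 2) := by
  have h := GaussianFourier.integral_rexp_neg_mul_sq_norm
    (V := EuclideanSpace ℝ (Fin d)) (b := 1/2) (by norm_num)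
  simp_rw [hring] at h
  rw [h, finrank_euclideanSpace_fin, show π / (1/2 : ℝ) = 2 * π by ring]

private noncomputable def fij (i j : Fin d') (t : ℝ) : ℝ :=
  (if j = i then t ^ 2 else 1) * Real.exp (-t ^ 2 / 2)

lemma int_sq_exp_nd (d : ℕ) :
    ∫ u : EuclideanSpace ℝ (Fin d), ‖u‖ ^ 2 * Real.exp (-‖u‖ ^ 2 / 2)
      = d * (2 * π) ^ ((d:ℝ) / 2) := by
  have hm := (EuclideanSpace.volume_preserving_symm_measurableEquiv_toLp (Fin d)).symm
  rw [← hm.integral_comp (MeasurableEquiv.measurableEmbedding _)]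
  have hnorm : ∀ x : Fin d → ℝ,
      ‖(MeasurableEquiv.toLp 2 (Fin d → ℝ)).symm.symm x‖ ^ 2 = ∑ i, x i ^ 2 := by
    intro x
    rw [EuclideanSpace.norm_eq, Real.sq_sqrt (Finset.sum_nonneg fun i _ => by positivity)]
    simp [Real.norm_eq_abs, sq_abs]
  have hsplit : ∀ x : Fin d → ℝ,
      ‖(MeasurableEquiv.toLp 2 (Fin d → ℝ)).symm.symm x‖ ^ 2
        * Real.exp (-‖(MeasurableEquiv.toLp 2 (Fin d → ℝ)).symm.symm x‖ ^ 2 / 2)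
      = ∑ i, ∏ j, fij i j (x j) := by
    intro x
    rw [hnorm]
    have hexp : Real.exp (-(∑ i, x i ^ 2) / 2) = ∏ i, Real.exp (-x i ^ 2 / 2) := by
      rw [← Real.exp_sum]
      congr 1
      rw [← Finset.sum_div]
      congr 1
      rw [← Finset.sum_neg_distrib]
    rw [hexp, Finset.sum_mul]
    refine Finset.sum_congr rfl fun i _ => ?_
    simp only [fij]
    rw [Finset.prod_mul_distrib, Finset.prod_ite_eq' Finset.univ i (fun j => x j ^ 2)]
    simp
  have hfint : ∀ i j : Fin d, Integrable (fij i j) := by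
    intro i j
    by_cases h : j = i
    · have he : fij i j = fun t : ℝ => t ^ 2 * Real.exp (-t ^ 2 / 2) := by
        funext t; simp [fij, h]
      rw [he]; exact integrable_sq_exp1d
    · have he : fij i j = fun t : ℝ => Real.exp (-t ^ 2 / 2) := by
        funext t; simp [fij, h]
      rw [he]; exact integrable_exp1d
  have heach : ∀ i j : Fin d, (∫ t : ℝ, fij i j t) = Real.sqrt (2 * π) := by
    intro i j
    by_cases h : j = i
    · have he : fij i j = fun t : ℝ => t ^ 2 * Real.exp (-t ^ 2 / 2) := by
        funext t; simp [fij, h]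
      rw [he]; exact int_sq_exp1d
    · have he : fij i j = fun t : ℝ => Real.exp (-t ^ 2 / 2) := by
        funext t; simp [fij, h]
      rw [he]; exact int_exp1d
  calc ∫ x : Fin d → ℝ, (fun u : EuclideanSpace ℝ (Fin d) => ‖u‖ ^ 2 * Real.exp (-‖u‖ ^ 2 / 2))
        ((MeasurableEquiv.toLp 2 (Fin d → ℝ)).symm.symm x)
      = ∫ x : Fin d → ℝ, ∑ i, ∏ j, fij i j (x j) := by
        congr 1; funext x; exact hsplit x
    _ = ∑ i : Fin d, ∫ x : Fin d → ℝ, ∏ j, fij i j (x j) := by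
        exact integral_finset_sum _ fun i _ =>
          Integrable.fintype_prod (f := fun j => fij i j) (fun j => hfint i j)
    _ = ∑ i : Fin d, ∏ j : Fin d, ∫ t : ℝ, fij i j t := by
        refine Finset.sum_congr rfl fun i _ => ?_
        exact MeasureTheory.integral_fintype_prod_eq_prod _
    _ = d * (2 * π) ^ ((d:ℝ) / 2) := by
        have : ∀ i : Fin d, (∏ j : Fin d, ∫ t : ℝ, fij i j t) = Real.sqrt (2 * π) ^ d := by
          intro i
          rw [Finset.prod_congr rfl fun j _ => heach i j, Finset.prod_const,
            Finset.card_univ, Fintype.card_fin]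
        rw [Finset.sum_congr rfl fun i _ => this i, Finset.sum_const, Finset.card_univ,
          Fintype.card_fin, nsmul_eq_mul]
        congr 1
        rw [Real.sqrt_eq_rpow, ← Real.rpow_natCast ((2 * π) ^ (1/2 : ℝ)) d,
          ← Real.rpow_mul (by positivity)]
        congr 1
        ring

lemma tendsto_pow_exp_sq (n : ℕ) :
    Tendsto (fun r : ℝ => r ^ n * Real.exp (-r ^ 2 / 2)) atTop (𝓝 0) := by
  have h := tendsto_rpow_abs_mul_exp_neg_mul_sq_cocompact (a := 1/2) (by norm_num) n
  have h2 : Tendsto (fun r : ℝ => |r| ^ (n:ℝ) * Real.exp (-(1/2 : ℝ) * r ^ 2)) atTop (𝓝 0) :=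
    h.mono_left (by rw [cocompact_eq_atBot_atTop]; exact le_sup_right)
  refine h2.congr' ?_
  filter_upwards [eventually_ge_atTop (0:ℝ)] with r hr
  rw [abs_of_nonneg hr, Real.rpow_natCast, hring]


/-- Equation (39) in the proof of Theorem 1: the ratio
`e^{−2δ} ∫ p(x'−y) ‖y‖² N^δ_d(y) dy / ∫ p(x'−y) N^δ_d(y) dy` tends to `d` as `δ → −∞`. -/
theorem smoothed_second_moment_ratio_tendsto
    (d : ℕ) (hd : 0 < d)
    (p : EuclideanSpace ℝ (Fin d) → ℝ)
    (hp_cont : Continuous p)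
    (hp_nonneg : ∀ y, 0 ≤ p y)
    (hp_prob : ∫ y, p y = 1)
    (hp_mom2 : Integrable fun y => ‖y‖ ^ 2 * p y)
    (x' : EuclideanSpace ℝ (Fin d)) (hx' : 0 < p x') :
    Tendsto
      (fun δ : ℝ =>
        (Real.exp (-2 * δ) * ∫ y, p (x' - y) * ‖y‖ ^ 2 * gaussDens d δ y) /
          ∫ y, p (x' - y) * gaussDens d δ y)
      atBot (𝓝 (d : ℝ)) := by
  classical
  have hd' : (d:ℝ) ≠ 0 := Nat.cast_ne_zero.mpr hd.ne'
  set c2 : ℝ := (2 * π) ^ (-(d:ℝ)/2) with hc2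
  have hc2pos : 0 < c2 := Real.rpow_pos_of_pos (by positivity) _
  set φ₀ : (EuclideanSpace ℝ (Fin d)) → ℝ := fun u => c2 * Real.exp (-‖u‖ ^ 2 / 2) with hφ₀
  set φ₂ : (EuclideanSpace ℝ (Fin d)) → ℝ := fun u => (d:ℝ)⁻¹ * (‖u‖ ^ 2 * φ₀ u) with hφ₂
  have hφ₀nonneg : ∀ u, 0 ≤ φ₀ u := fun u => by
    rw [hφ₀]; positivity
  have hφ₂nonneg : ∀ u, 0 ≤ φ₂ u := fun u => by
    rw [hφ₂]; dsimp only; have := hφ₀nonneg u; positivity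
  have hrpow : c2 * (2 * π) ^ ((d:ℝ)/2) = 1 := by
    rw [hc2, ← Real.rpow_add (by positivity)]
    rw [show -(d:ℝ)/2 + (d:ℝ)/2 = 0 by ring, Real.rpow_zero]
  have hφ₀int : ∫ u : (EuclideanSpace ℝ (Fin d)), φ₀ u = 1 := by
    rw [hφ₀]
    rw [MeasureTheory.integral_const_mul, int_exp_nd d, hrpow]
  have hφ₂int : ∫ u : (EuclideanSpace ℝ (Fin d)), φ₂ u = 1 := by
    rw [hφ₂]
    simp only [hφ₀]
    have he : ∀ u : (EuclideanSpace ℝ (Fin d)), (d:ℝ)⁻¹ * (‖u‖ ^ 2 * (c2 * Real.exp (-‖u‖ ^ 2 / 2)))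
        = ((d:ℝ)⁻¹ * c2) * (‖u‖ ^ 2 * Real.exp (-‖u‖ ^ 2 / 2)) := fun u => by ring
    simp_rw [he]
    rw [MeasureTheory.integral_const_mul, int_sq_exp_nd d,
      show (d:ℝ)⁻¹ * c2 * ((d:ℝ) * (2*π) ^ ((d:ℝ)/2))
        = ((d:ℝ)⁻¹ * (d:ℝ)) * (c2 * (2*π) ^ ((d:ℝ)/2)) from by ring,
      inv_mul_cancel₀ hd', one_mul, hrpow]
  have hfr : Module.finrank ℝ (EuclideanSpace ℝ (Fin d)) = d := finrank_euclideanSpace_fin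
  have hdecay₀ : Tendsto (fun x : (EuclideanSpace ℝ (Fin d)) => ‖x‖ ^ Module.finrank ℝ (EuclideanSpace ℝ (Fin d)) * φ₀ x) (Bornology.cobounded (EuclideanSpace ℝ (Fin d))) (𝓝 0) := by
    rw [hfr]
    have h1 : Tendsto (fun r : ℝ => c2 * (r ^ d * Real.exp (-r ^ 2 / 2))) atTop (𝓝 (c2 * 0)) :=
      (tendsto_pow_exp_sq d).const_mul c2
    rw [mul_zero] at h1
    refine (h1.comp tendsto_norm_cobounded_atTop).congr fun x => ?_
    simp only [hφ₀, Function.comp]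
    ring
  have hdecay₂ : Tendsto (fun x : (EuclideanSpace ℝ (Fin d)) => ‖x‖ ^ Module.finrank ℝ (EuclideanSpace ℝ (Fin d)) * φ₂ x) (Bornology.cobounded (EuclideanSpace ℝ (Fin d))) (𝓝 0) := by
    rw [hfr]
    have h1 : Tendsto (fun r : ℝ => ((d:ℝ)⁻¹ * c2) * (r ^ (d+2) * Real.exp (-r ^ 2 / 2)))
        atTop (𝓝 (((d:ℝ)⁻¹ * c2) * 0)) := (tendsto_pow_exp_sq (d+2)).const_mul _
    rw [mul_zero] at h1
    refine (h1.comp tendsto_norm_cobounded_atTop).congr fun x => ?_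
    simp only [hφ₂, hφ₀, Function.comp]
    rw [pow_add]
    ring
  have hpInt : Integrable p := integrable_of_integral_eq_one hp_prob
  have hA := tendsto_integral_comp_smul_smul_of_integrable' (μ := (volume : Measure (EuclideanSpace ℝ (Fin d)))) (x₀ := x')
    hφ₀nonneg hφ₀int hdecay₀ hpInt hp_cont.continuousAt
  have hB := tendsto_integral_comp_smul_smul_of_integrable' (μ := (volume : Measure (EuclideanSpace ℝ (Fin d)))) (x₀ := x')
    hφ₂nonneg hφ₂int hdecay₂ hpInt hp_cont.continuousAt
  have hc : Tendsto (fun δ : ℝ => Real.exp (-δ)) atBot atTop :=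
    Real.tendsto_exp_atTop.comp tendsto_neg_atBot_atTop
  have hkey : Tendsto (fun δ : ℝ =>
      ((d:ℝ) * ∫ x : (EuclideanSpace ℝ (Fin d)), (Real.exp (-δ) ^ Module.finrank ℝ (EuclideanSpace ℝ (Fin d)) * φ₂ (Real.exp (-δ) • (x' - x))) • p x) /
        ∫ x : (EuclideanSpace ℝ (Fin d)), (Real.exp (-δ) ^ Module.finrank ℝ (EuclideanSpace ℝ (Fin d)) * φ₀ (Real.exp (-δ) • (x' - x))) • p x)
      atBot (𝓝 (((d:ℝ) * p x') / p x')) :=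
    ((tendsto_const_nhds.mul hB).div hA hx'.ne').comp hc
  rw [mul_div_assoc, div_self hx'.ne', mul_one] at hkey
  -- pointwise identities
  have e2 : ∀ δ : ℝ, Real.exp (-δ) ^ 2 = Real.exp (-2 * δ) := by
    intro δ
    rw [← Real.exp_nat_mul]
    congr 1
    push_cast
    ring
  have hgauss : ∀ (δ : ℝ) (y : (EuclideanSpace ℝ (Fin d))), Real.exp (-δ) ^ Module.finrank ℝ (EuclideanSpace ℝ (Fin d)) * φ₀ (Real.exp (-δ) • y)
      = gaussDens d δ y := by
    intro δ y
    rw [hfr]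
    have e1 : Real.exp (-δ) ^ d = Real.exp (-(d:ℝ) * δ) := by
      rw [← Real.exp_nat_mul]
      congr 1
      ring
    simp only [hφ₀, gaussDens, ← hc2]
    rw [norm_smul, Real.norm_eq_abs, abs_of_pos (Real.exp_pos _), mul_pow, e2, e1]
    ring_nf
  have hIdA : ∀ δ : ℝ, (∫ x : (EuclideanSpace ℝ (Fin d)), (Real.exp (-δ) ^ Module.finrank ℝ (EuclideanSpace ℝ (Fin d)) * φ₀ (Real.exp (-δ) • (x' - x))) • p x)
      = ∫ y : (EuclideanSpace ℝ (Fin d)), p (x' - y) * gaussDens d δ y := by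
    intro δ
    rw [← integral_sub_left_eq_self (fun y : (EuclideanSpace ℝ (Fin d)) => p (x' - y) * gaussDens d δ y) volume x']
    congr 1
    funext x
    rw [smul_eq_mul, hgauss δ (x' - x), sub_sub_cancel]
    ring
  have hIdB : ∀ δ : ℝ, ((d:ℝ) * ∫ x : (EuclideanSpace ℝ (Fin d)), (Real.exp (-δ) ^ Module.finrank ℝ (EuclideanSpace ℝ (Fin d)) * φ₂ (Real.exp (-δ) • (x' - x))) • p x)
      = Real.exp (-2 * δ) * ∫ y : (EuclideanSpace ℝ (Fin d)), p (x' - y) * ‖y‖ ^ 2 * gaussDens d δ y := by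
    intro δ
    rw [← integral_sub_left_eq_self (fun y : (EuclideanSpace ℝ (Fin d)) => p (x' - y) * ‖y‖ ^ 2 * gaussDens d δ y) volume x']
    rw [← MeasureTheory.integral_const_mul, ← MeasureTheory.integral_const_mul]
    congr 1
    funext x
    have h2 : Real.exp (-δ) ^ Module.finrank ℝ (EuclideanSpace ℝ (Fin d)) * φ₂ (Real.exp (-δ) • (x' - x))
        = (d:ℝ)⁻¹ * (Real.exp (-2 * δ) * (‖x' - x‖ ^ 2 * gaussDens d δ (x' - x))) := by
      simp only [hφ₂]
      rw [← hgauss δ (x' - x), norm_smul, Real.norm_eq_abs, abs_of_pos (Real.exp_pos _),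
        mul_pow, e2]
      ring
    rw [smul_eq_mul, h2, sub_sub_cancel]
    field_simp
  refine hkey.congr fun δ => ?_
  rw [hIdA δ, hIdB δ]
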